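/- arXiv:1408.1903 — 2 statements merged into one kernel-verified Lean document; each statement's English description precedes it below -/
import Mathlib

section
/- Let M be a Wall form, let N ≤ M be a sub-Wall form with r(N) ≥ g ≥ d, where d = d(H), and let f : W → M be a morphism of Wall forms. Then r(N ∩ f(W)^⊥) ≥ g − 2 − d. Similarly, if r̄(N) ≥ g, then r̄(N ∩ f(W)^⊥) ≥ g − 2 − d. -/
/-!
Framework: `H`-pairs and Wall forms, following N. Perlmutter,
"Homological stability for the moduli spaces of products of spheres".

A form parameter `(G, ∂, π, ε)` is recorded together with the two
compatibility identities `∂(ε•h) = ∂(h)` and `π(∂(h)) = h + ε•h`, which hold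
in the geometric situation considered in the paper and which are exactly the
conditions needed for the standard Wall forms `W^g` to exist.
-/

section HPairs

/-- An `H`-pair: a pair of abelian groups together with a ℤ-bilinear
(i.e. biadditive) map `τ : M₋ × H → M₊`. -/
structure HPair (H : Type) [AddCommGroup H] where
  Neg : Type
  Pos : Type
  [negGrp : AddCommGroup Neg]
  [posGrp : AddCommGroup Pos]
  tau : Neg →+ H →+ Pos

attribute [instance] HPair.negGrp HPair.posGrp

variable {H : Type} [AddCommGroup H]

/-- An `H`-map of `H`-pairs. -/
structure HPairHom (M N : HPair H) where
  neg : M.Neg →+ N.Neg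
  pos : M.Pos →+ N.Pos
  comm : ∀ x h, pos (M.tau x h) = N.tau (neg x) h

/-- An isomorphism of `H`-pairs. -/
structure HPairIso (M N : HPair H) where
  toHom : HPairHom M N
  invHom : HPairHom N M
  left_neg : ∀ x, invHom.neg (toHom.neg x) = x
  right_neg : ∀ x, toHom.neg (invHom.neg x) = x
  left_pos : ∀ y, invHom.pos (toHom.pos y) = y
  right_pos : ∀ y, toHom.pos (invHom.pos y) = y

/-- An `H`-pair is finitely generated if both component groups are. -/
def HPair.FG (M : HPair H) : Prop :=
  AddGroup.FG M.Neg ∧ AddGroup.FG M.Pos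

/-- The componentwise direct sum of two `H`-pairs. -/
@[reducible] def HPair.sum (M N : HPair H) : HPair H where
  Neg := M.Neg × N.Neg
  Pos := M.Pos × N.Pos
  tau :=
    { toFun := fun x => (M.tau x.1).prod (N.tau x.2)
      map_zero' := by
        refine AddMonoidHom.ext fun h => ?_
        simp [Prod.ext_iff]
      map_add' := by
        intro x y
        refine AddMonoidHom.ext fun h => ?_
        simp [Prod.ext_iff] }

/-- The left inclusion `M → M ⊕ N`. -/
def HPairHom.inl (M N : HPair H) : HPairHom M (M.sum N) where
  neg := AddMonoidHom.inl M.Neg N.Neg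
  pos := AddMonoidHom.inl M.Pos N.Pos
  comm := by
    intro x h
    simp [HPair.sum, Prod.ext_iff]

/-- The right inclusion `N → M ⊕ N`. -/
def HPairHom.inr (M N : HPair H) : HPairHom N (M.sum N) where
  neg := AddMonoidHom.inr M.Neg N.Neg
  pos := AddMonoidHom.inr M.Pos N.Pos
  comm := by
    intro x h
    simp [HPair.sum, Prod.ext_iff]

/-- The `H`-pair `P⁰`, with `P⁰₋ = 0`, `P⁰₊ = ℤ` and `τ = 0`. -/
def P0 (H : Type) [AddCommGroup H] : HPair H where
  Neg := PUnit
  Pos := ℤ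
  tau := 0

/-- The `H`-pair `P¹`, with `P¹₋ = ℤ`, `P¹₊ = H` and `τ(t, h) = t • h`. -/
def P1 (H : Type) [AddCommGroup H] : HPair H where
  Neg := ℤ
  Pos := H
  tau := zmultiplesHom (H →+ H) (AddMonoidHom.id H)

/-- The generating-set length `d(H)`: the minimal `k` such that there is a
surjection `ℤ^k → H`. -/
noncomputable def dlen (H : Type) [AddCommGroup H] : ℕ :=
  sInf { k : ℕ | ∃ φ : (Fin k → ℤ) →+ H, Function.Surjective φ }

end HPairs

section WallForms

variable {H : Type} [AddCommGroup H]

/-- A form parameter `(G, ∂, π, ε)` for the category of `H`-pairs.  The two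
compatibility identities `bd_eps` and `pi_bd` hold in the geometric setting of
the paper and are needed for the standard Wall forms to exist. -/
structure FormParameter (H : Type) [AddCommGroup H] where
  G : HPair H
  bd : H →+ G.Pos
  pi : G.Pos →+ H
  eps : ℤ
  eps_pm : eps = 1 ∨ eps = -1
  bd_eps : ∀ h : H, bd (eps • h) = bd h
  pi_bd : ∀ h : H, pi (bd h) = h + eps • h

variable {P : FormParameter H}

/-- A Wall form structure (with parameter `P`) on the `H`-pair `C`. -/
structure WallAux (P : FormParameter H) (C : HPair H) where
  lam : C.Neg →+ C.Pos →+ ℤ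
  mu : C.Pos →+ C.Pos →+ H
  alphaNeg : C.Neg →+ P.G.Neg
  alphaPos : C.Pos → P.G.Pos
  mu_symm : ∀ y y', mu y y' = P.eps • mu y' y
  lam_tau : ∀ x x' h, lam x (C.tau x' h) = 0
  mu_tau : ∀ x h y, mu (C.tau x h) y = lam x y • h
  alphaPos_add : ∀ y y', alphaPos (y + y') = alphaPos y + alphaPos y' + P.bd (mu y y')
  mu_diag : ∀ y, mu y y = P.pi (alphaPos y)
  alphaPos_tau : ∀ x h, alphaPos (C.tau x h) = P.G.tau (alphaNeg x) h

/-- A Wall form with parameter `P`: a finitely generated `H`-pair together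
with a Wall form structure. -/
structure WallForm (P : FormParameter H) where
  carrier : HPair H
  fgNeg : AddGroup.FG carrier.Neg
  fgPos : AddGroup.FG carrier.Pos
  str : WallAux P carrier

/-- The property of an `H`-map to preserve all values of `λ`, `μ`, `α₋`, `α₊`. -/
def IsWallHom {C D : HPair H} (S : WallAux P C) (T : WallAux P D)
    (f : HPairHom C D) : Prop :=
  (∀ x y, T.lam (f.neg x) (f.pos y) = S.lam x y) ∧
  (∀ y y', T.mu (f.pos y) (f.pos y') = S.mu y y') ∧
  (∀ x, T.alphaNeg (f.neg x) = S.alphaNeg x) ∧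
  (∀ y, T.alphaPos (f.pos y) = S.alphaPos y)

/-- A morphism of Wall forms. -/
structure WallHom (M N : WallForm P) where
  hom : HPairHom M.carrier N.carrier
  isWall : IsWallHom M.str N.str hom

/-- An isomorphism of Wall forms: a morphism with a two-sided inverse morphism. -/
structure WallIso (M N : WallForm P) where
  toHom : WallHom M N
  invHom : WallHom N M
  left_neg : ∀ x, invHom.hom.neg (toHom.hom.neg x) = x
  right_neg : ∀ x, toHom.hom.neg (invHom.hom.neg x) = x
  left_pos : ∀ y, invHom.hom.pos (toHom.hom.pos y) = y
  right_pos : ∀ y, toHom.hom.pos (invHom.hom.pos y) = y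

end WallForms
section Extra

variable {H : Type} [AddCommGroup H] {P : FormParameter H}

/-- A subgroup of a finitely generated abelian group is finitely generated. -/
theorem addGroup_fg_subgroup {A : Type} [AddCommGroup A] (hA : AddGroup.FG A)
    (S : AddSubgroup A) : AddGroup.FG S := by
  haveI : Module.Finite ℤ A := Module.Finite.iff_addGroup_fg.mpr hA
  haveI : IsNoetherian ℤ A := isNoetherian_of_isNoetherianRing_of_finite ℤ A
  have h : (AddSubgroup.toIntSubmodule S).FG := IsNoetherian.noetherian _
  have h2 : Module.Finite ℤ (AddSubgroup.toIntSubmodule S) := Module.Finite.iff_fg.mpr h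
  exact Module.Finite.iff_addGroup_fg.mp h2

theorem addGroup_fg_of_module_finite {A : Type} [AddCommGroup A]
    [Module.Finite ℤ A] : AddGroup.FG A :=
  Module.Finite.iff_addGroup_fg.mp inferInstance

end Extra

section StdWall

variable {H : Type} [AddCommGroup H]

/-- The underlying `H`-pair of the standard Wall form of rank `g`:
`W^g₋ = ℤ^g` and `W^g₊ = ℤ^g × H^g`  (the first factor records the
`b`-coordinates, the second the `τ(a_i, -)`-coordinates). -/
@[reducible] def stdPair (H : Type) [AddCommGroup H] (g : ℕ) : HPair H where
  Neg := Fin g → ℤ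
  Pos := (Fin g → ℤ) × (Fin g → H)
  tau :=
    { toFun := fun x =>
        { toFun := fun h => (0, fun i => x i • h)
          map_zero' := by
            refine Prod.ext rfl ?_
            funext i
            simp
          map_add' := by
            intro h h'
            refine Prod.ext (by simp) ?_
            funext i
            simp [smul_add] }
      map_zero' := by
        refine AddMonoidHom.ext fun h => ?_
        refine Prod.ext rfl ?_
        funext i
        simp
      map_add' := by
        intro x x'
        refine AddMonoidHom.ext fun h => ?_
        refine Prod.ext (by simp) ?_
        funext i
        simp [add_smul] }

variable (P : FormParameter H)

/-- The standard Wall form `W^g` of rank `g` with parameter `P`. -/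
def stdWall [AddGroup.FG H] (g : ℕ) : WallForm P where
  carrier := stdPair H g
  fgNeg := by
    have : Module.Finite ℤ (Fin g → ℤ) := inferInstance
    exact addGroup_fg_of_module_finite
  fgPos := by
    haveI : Module.Finite ℤ H := Module.Finite.iff_addGroup_fg.mpr ‹AddGroup.FG H›
    have : Module.Finite ℤ ((Fin g → ℤ) × (Fin g → H)) := inferInstance
    exact addGroup_fg_of_module_finite
  str :=
    { lam :=
        { toFun := fun x =>
            { toFun := fun w => ∑ i, x i * w.1 i
              map_zero' := by simp
              map_add' := by
                intro w w'
                simp [mul_add, Finset.sum_add_distrib] }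
          map_zero' := by
            refine AddMonoidHom.ext fun w => ?_
            show (∑ i, (0 : Fin g → ℤ) i * w.1 i) = 0
            simp
          map_add' := by
            intro x x'
            refine AddMonoidHom.ext fun w => ?_
            simp [add_mul, Finset.sum_add_distrib] }
      mu :=
        { toFun := fun w =>
            { toFun := fun w' => (∑ i, w'.1 i • w.2 i) + P.eps • ∑ i, w.1 i • w'.2 i
              map_zero' := by simp
              map_add' := by
                intro w' w''
                simp only [Prod.fst_add, Prod.snd_add, Pi.add_apply, add_smul, smul_add,
                  Finset.sum_add_distrib]
                abel }
          map_zero' := by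
            refine AddMonoidHom.ext fun w' => ?_
            simp
          map_add' := by
            intro w w'
            refine AddMonoidHom.ext fun w'' => ?_
            simp only [Prod.fst_add, Prod.snd_add, Pi.add_apply, add_smul, smul_add,
              Finset.sum_add_distrib, AddMonoidHom.coe_mk, ZeroHom.coe_mk,
              AddMonoidHom.add_apply]
            abel }
      alphaNeg := 0
      alphaPos := fun w => P.bd (∑ i, w.1 i • w.2 i)
      mu_symm := by
        intro y y'
        have he : P.eps * P.eps = 1 := by
          rcases P.eps_pm with h | h <;> simp [h]
        show (∑ i, y'.1 i • y.2 i) + P.eps • ∑ i, y.1 i • y'.2 i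
            = P.eps • ((∑ i, y.1 i • y'.2 i) + P.eps • ∑ i, y'.1 i • y.2 i)
        rw [smul_add, smul_smul, he, one_smul, add_comm]
      lam_tau := by
        intro x x' h
        show (∑ i, x i * (0 : Fin _ → ℤ) i) = 0
        simp
      mu_tau := by
        intro x h y
        show (∑ i, y.1 i • (fun i => x i • h) i) + P.eps • ∑ i, (0 : Fin _ → ℤ) i • y.2 i
            = (∑ i, x i * y.1 i) • h
        simp only [Pi.zero_apply, zero_smul, Finset.sum_const_zero, smul_zero, add_zero]
        rw [Finset.sum_smul]
        congr 1
        funext i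
        rw [smul_smul, mul_comm]
      alphaPos_add := by
        intro y y'
        show P.bd (∑ i, (y.1 i + y'.1 i) • (y.2 i + y'.2 i))
            = P.bd (∑ i, y.1 i • y.2 i) + P.bd (∑ i, y'.1 i • y'.2 i)
              + P.bd ((∑ i, y'.1 i • y.2 i) + P.eps • ∑ i, y.1 i • y'.2 i)
        have expand : ∀ i : Fin _, (y.1 i + y'.1 i) • (y.2 i + y'.2 i)
            = (y.1 i • y.2 i + y'.1 i • y'.2 i) + (y'.1 i • y.2 i + y.1 i • y'.2 i) := by
          intro i
          rw [add_smul, smul_add, smul_add]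
          abel
        rw [Finset.sum_congr rfl fun i _ => expand i, Finset.sum_add_distrib,
          Finset.sum_add_distrib, Finset.sum_add_distrib, map_add, map_add, map_add, map_add,
          P.bd_eps]
      mu_diag := by
        intro y
        show (∑ i, y.1 i • y.2 i) + P.eps • ∑ i, y.1 i • y.2 i
            = P.pi (P.bd (∑ i, y.1 i • y.2 i))
        rw [P.pi_bd]
      alphaPos_tau := by
        intro x h
        show P.bd (∑ i, (0 : Fin _ → ℤ) i • (fun i => x i • h) i) = P.G.tau ((0 : _ →+ _) x) h
        simp }

variable {P}

/-- The `i`-th standard generator `a_i ∈ W^g₋`. -/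
def stdA [AddGroup.FG H] {g : ℕ} (i : Fin g) : (stdWall P g).carrier.Neg :=
  Pi.single i 1

/-- The `i`-th standard generator `b_i ∈ W^g₊`. -/
def stdB [AddGroup.FG H] {g : ℕ} (i : Fin g) : (stdWall P g).carrier.Pos :=
  (Pi.single i 1, 0)

end StdWall
section SubPairs

variable {H : Type} [AddCommGroup H] {P : FormParameter H}

/-- A sub-`H`-pair of the `H`-pair `C`. -/
structure SubPair (C : HPair H) where
  neg : AddSubgroup C.Neg
  pos : AddSubgroup C.Pos
  tau_mem : ∀ x ∈ neg, ∀ h, C.tau x h ∈ pos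

/-- The componentwise intersection of two sub-`H`-pairs. -/
def SubPair.inf {C : HPair H} (N N' : SubPair C) : SubPair C where
  neg := N.neg ⊓ N'.neg
  pos := N.pos ⊓ N'.pos
  tau_mem := fun x hx h => ⟨N.tau_mem x hx.1 h, N'.tau_mem x hx.2 h⟩

/-- The image of an `H`-map, as a sub-`H`-pair of the codomain. -/
def HPairHom.rangeSub {C D : HPair H} (f : HPairHom C D) : SubPair D where
  neg := f.neg.range
  pos := f.pos.range
  tau_mem := by
    rintro x ⟨a, rfl⟩ h
    exact ⟨C.tau a h, f.comm a h⟩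

/-- The kernel of an `H`-map, as a sub-`H`-pair of the domain. -/
def HPairHom.kerSub {C D : HPair H} (f : HPairHom C D) : SubPair C where
  neg := f.neg.ker
  pos := f.pos.ker
  tau_mem := by
    intro x hx h
    have hx' : f.neg x = 0 := hx
    have h2 : f.pos (C.tau x h) = D.tau (f.neg x) h := f.comm x h
    rw [hx'] at h2
    have h3 : f.pos (C.tau x h) = 0 := by
      rw [h2, map_zero, AddMonoidHom.zero_apply]
    exact h3

/-- The orthogonal complement of a sub-`H`-pair, with respect to a Wall form
structure `S` on the ambient `H`-pair. -/
def SubPair.perp {C : HPair H} (S : WallAux P C) (N : SubPair C) : SubPair C where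
  neg :=
    { carrier := { x | ∀ w ∈ N.pos, S.lam x w = 0 }
      add_mem' := by
        intro a b ha hb w hw
        rw [map_add, AddMonoidHom.add_apply, ha w hw, hb w hw, add_zero]
      zero_mem' := by
        intro w hw
        rw [map_zero, AddMonoidHom.zero_apply]
      neg_mem' := by
        intro a ha w hw
        rw [map_neg, AddMonoidHom.neg_apply, ha w hw, neg_zero] }
  pos :=
    { carrier := { y | (∀ v ∈ N.neg, S.lam v y = 0) ∧ ∀ w ∈ N.pos, S.mu y w = 0 }
      add_mem' := by
        intro a b ha hb
        refine ⟨fun v hv => ?_, fun w hw => ?_⟩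
        · rw [map_add, ha.1 v hv, hb.1 v hv, add_zero]
        · rw [map_add, AddMonoidHom.add_apply, ha.2 w hw, hb.2 w hw, add_zero]
      zero_mem' := by
        refine ⟨fun v hv => ?_, fun w hw => ?_⟩
        · rw [map_zero]
        · rw [map_zero, AddMonoidHom.zero_apply]
      neg_mem' := by
        intro a ha
        refine ⟨fun v hv => ?_, fun w hw => ?_⟩
        · rw [map_neg, ha.1 v hv, neg_zero]
        · rw [map_neg, AddMonoidHom.neg_apply, ha.2 w hw, neg_zero] }
  tau_mem := by
    intro x hx h
    refine ⟨fun v hv => S.lam_tau v x h, fun w hw => ?_⟩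
    rw [S.mu_tau x h w, hx w hw, zero_smul]

/-- Orthogonality of two sub-`H`-pairs with respect to a Wall form structure
`S`: trivial intersection and mutual containment in orthogonal complements. -/
def OrthogonalIn {C : HPair H} (S : WallAux P C) (N N' : SubPair C) : Prop :=
  N.neg ⊓ N'.neg = ⊥ ∧ N.pos ⊓ N'.pos = ⊥ ∧
  N.neg ≤ (N'.perp S).neg ∧ N.pos ≤ (N'.perp S).pos ∧
  N'.neg ≤ (N.perp S).neg ∧ N'.pos ≤ (N.perp S).pos

/-- The underlying `H`-pair of a sub-`H`-pair. -/
@[reducible] def SubPair.toPair {C : HPair H} (N : SubPair C) : HPair H where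
  Neg := N.neg
  Pos := N.pos
  tau :=
    { toFun := fun x =>
        { toFun := fun h => ⟨C.tau x h, N.tau_mem x x.2 h⟩
          map_zero' := by
            apply Subtype.ext
            simp
          map_add' := by
            intro h h'
            apply Subtype.ext
            simp }
      map_zero' := by
        refine AddMonoidHom.ext fun h => ?_
        apply Subtype.ext
        simp
      map_add' := by
        intro x x'
        refine AddMonoidHom.ext fun h => ?_
        apply Subtype.ext
        simp }

/-- The restriction of a Wall form structure to a sub-`H`-pair. -/
def SubPair.restrict {C : HPair H} (S : WallAux P C) (N : SubPair C) :
    WallAux P N.toPair where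
  lam :=
    { toFun := fun x => (S.lam (x : C.Neg)).comp N.pos.subtype
      map_zero' := by
        refine AddMonoidHom.ext fun y => ?_
        simp
      map_add' := by
        intro x x'
        refine AddMonoidHom.ext fun y => ?_
        simp }
  mu :=
    { toFun := fun y => (S.mu (y : C.Pos)).comp N.pos.subtype
      map_zero' := by
        refine AddMonoidHom.ext fun y => ?_
        simp
      map_add' := by
        intro y y'
        refine AddMonoidHom.ext fun y'' => ?_
        simp }
  alphaNeg := S.alphaNeg.comp N.neg.subtype
  alphaPos := fun y => S.alphaPos (y : C.Pos)
  mu_symm := fun y y' => S.mu_symm (y : C.Pos) y'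
  lam_tau := fun x x' h => S.lam_tau (x : C.Neg) x' h
  mu_tau := fun x h y => S.mu_tau (x : C.Neg) h y
  alphaPos_add := fun y y' => S.alphaPos_add (y : C.Pos) y'
  mu_diag := fun y => S.mu_diag (y : C.Pos)
  alphaPos_tau := fun x h => S.alphaPos_tau (x : C.Neg) h

/-- A sub-`H`-pair of (the carrier of) a Wall form is itself a Wall form, via
the restricted structure maps. -/
def SubPair.toWall {M : WallForm P} (N : SubPair M.carrier) : WallForm P where
  carrier := N.toPair
  fgNeg := addGroup_fg_subgroup M.fgNeg N.neg
  fgPos := addGroup_fg_subgroup M.fgPos N.pos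
  str := N.restrict M.str

end SubPairs
section SumAndRank

variable {H : Type} [AddCommGroup H] {P : FormParameter H}

/-- The orthogonal direct sum of two Wall forms. -/
def WallForm.sum (M N : WallForm P) : WallForm P where
  carrier := M.carrier.sum N.carrier
  fgNeg := by
    haveI : Module.Finite ℤ M.carrier.Neg := Module.Finite.iff_addGroup_fg.mpr M.fgNeg
    haveI : Module.Finite ℤ N.carrier.Neg := Module.Finite.iff_addGroup_fg.mpr N.fgNeg
    have : Module.Finite ℤ (M.carrier.Neg × N.carrier.Neg) := inferInstance
    exact Module.Finite.iff_addGroup_fg.mp this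
  fgPos := by
    haveI : Module.Finite ℤ M.carrier.Pos := Module.Finite.iff_addGroup_fg.mpr M.fgPos
    haveI : Module.Finite ℤ N.carrier.Pos := Module.Finite.iff_addGroup_fg.mpr N.fgPos
    have : Module.Finite ℤ (M.carrier.Pos × N.carrier.Pos) := inferInstance
    exact Module.Finite.iff_addGroup_fg.mp this
  str :=
    { lam :=
        { toFun := fun x => (M.str.lam x.1).coprod (N.str.lam x.2)
          map_zero' := by
            refine AddMonoidHom.ext fun y => ?_
            simp
          map_add' := by
            intro x x'
            refine AddMonoidHom.ext fun y => ?_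
            simp
            abel }
      mu :=
        { toFun := fun y => (M.str.mu y.1).coprod (N.str.mu y.2)
          map_zero' := by
            refine AddMonoidHom.ext fun y' => ?_
            simp
          map_add' := by
            intro y y'
            refine AddMonoidHom.ext fun y'' => ?_
            simp
            abel }
      alphaNeg := (M.str.alphaNeg).coprod (N.str.alphaNeg)
      alphaPos := fun y => M.str.alphaPos y.1 + N.str.alphaPos y.2
      mu_symm := by
        intro y y'
        show M.str.mu y.1 y'.1 + N.str.mu y.2 y'.2
            = P.eps • (M.str.mu y'.1 y.1 + N.str.mu y'.2 y.2)
        rw [smul_add, M.str.mu_symm y.1 y'.1, N.str.mu_symm y.2 y'.2]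
      lam_tau := by
        intro x x' h
        show M.str.lam x.1 (M.carrier.tau x'.1 h) + N.str.lam x.2 (N.carrier.tau x'.2 h) = 0
        rw [M.str.lam_tau, N.str.lam_tau, add_zero]
      mu_tau := by
        intro x h y
        show M.str.mu (M.carrier.tau x.1 h) y.1 + N.str.mu (N.carrier.tau x.2 h) y.2
            = (M.str.lam x.1 y.1 + N.str.lam x.2 y.2) • h
        rw [M.str.mu_tau, N.str.mu_tau, add_smul]
      alphaPos_add := by
        intro y y'
        show M.str.alphaPos (y.1 + y'.1) + N.str.alphaPos (y.2 + y'.2)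
            = (M.str.alphaPos y.1 + N.str.alphaPos y.2)
              + (M.str.alphaPos y'.1 + N.str.alphaPos y'.2)
              + P.bd (M.str.mu y.1 y'.1 + N.str.mu y.2 y'.2)
        rw [M.str.alphaPos_add, N.str.alphaPos_add, map_add]
        abel
      mu_diag := by
        intro y
        show M.str.mu y.1 y.1 + N.str.mu y.2 y.2
            = P.pi (M.str.alphaPos y.1 + N.str.alphaPos y.2)
        rw [map_add, M.str.mu_diag, N.str.mu_diag]
      alphaPos_tau := by
        intro x h
        show M.str.alphaPos (M.carrier.tau x.1 h) + N.str.alphaPos (N.carrier.tau x.2 h)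
            = P.G.tau (M.str.alphaNeg x.1 + N.str.alphaNeg x.2) h
        rw [M.str.alphaPos_tau, N.str.alphaPos_tau, map_add, AddMonoidHom.add_apply] }

variable [AddGroup.FG H]

/-- `rankGE M g` expresses the inequality `r(M) ≥ g` for the rank of a Wall
form: there exists a morphism of Wall forms `W^g → M`. -/
def rankGE (M : WallForm P) (g : ℕ) : Prop :=
  Nonempty (WallHom (stdWall P g) M)

/-- `srankGE M g` expresses the inequality `r̄(M) ≥ g` for the stable rank of
a Wall form: `r(M ⊕ W^j) ≥ g + j` for some `j`. -/
def srankGE (M : WallForm P) (g : ℕ) : Prop :=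
  ∃ j : ℕ, rankGE (M.sum (stdWall P j)) (g + j)

end SumAndRank

section Duality

variable {H : Type} [AddCommGroup H] {P : FormParameter H}

/-- The duality map `T⁰ : M₋ → Hom(M, P⁰)` of a Wall form. -/
def dualT0 (M : WallForm P) (v : M.carrier.Neg) : HPairHom M.carrier (P0 H) where
  neg := 0
  pos := M.str.lam v
  comm := by
    intro x h
    show M.str.lam v (M.carrier.tau x h) = ((P0 H).tau 0) h
    rw [M.str.lam_tau]
    show (0 : ℤ) = ((0 : _ →+ (H →+ ℤ)) 0) h
    rfl

/-- The duality map `T¹ : M₊ → Hom(M, P¹)` of a Wall form. -/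
def dualT1 (M : WallForm P) (w : M.carrier.Pos) : HPairHom M.carrier (P1 H) where
  neg := M.str.lam.flip w
  pos := M.str.mu.flip w
  comm := by
    intro x h
    show M.str.mu (M.carrier.tau x h) w = (P1 H).tau (M.str.lam x w) h
    rw [M.str.mu_tau]
    show M.str.lam x w • h = (M.str.lam x w • AddMonoidHom.id H) h
    simp

end Duality

section Aux1

variable {H : Type} [AddCommGroup H] {P : FormParameter H}

namespace WallAux

variable {C : HPair H} (S : WallAux P C)

lemma alphaPos_zero : S.alphaPos 0 = 0 := by
  have h := S.alphaPos_add 0 0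
  simp only [add_zero, map_zero, AddMonoidHom.zero_apply] at h
  exact (left_eq_add.mp h)

lemma alphaPos_neg_zero {y : C.Pos} (hy : S.alphaPos y = 0) (hmu : S.mu y y = 0) :
    S.alphaPos (-y) = 0 := by
  have h := S.alphaPos_add y (-y)
  simp only [add_neg_cancel, alphaPos_zero, hy, map_neg, AddMonoidHom.neg_apply, hmu,
    neg_zero, map_zero, zero_add, add_zero] at h
  exact h.symm

lemma alphaPos_zsmul_zero {y : C.Pos} (hy : S.alphaPos y = 0) (hmu : S.mu y y = 0)
    (t : ℤ) : S.alphaPos (t • y) = 0 := by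
  induction t using Int.induction_on with
  | zero => simpa using S.alphaPos_zero
  | succ n ih =>
      have : ((n : ℤ) + 1) • y = (n : ℤ) • y + y := by rw [add_smul, one_smul]
      rw [this, S.alphaPos_add, ih, hy]
      have : S.mu ((n : ℤ) • y) y = 0 := by rw [map_zsmul]; simp [hmu]
      simp [this, hmu]
  | pred n ih =>
      have : (-(n : ℤ) - 1) • y = (-(n : ℤ)) • y + (-y) := by
        rw [sub_smul, one_smul, sub_eq_add_neg]
      rw [this, S.alphaPos_add, ih, S.alphaPos_neg_zero hy hmu]
      have : S.mu ((-(n : ℤ)) • y) (-y) = 0 := by rw [map_zsmul]; simp [hmu]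
      simp [this, hmu]

lemma alphaPos_sum {n : ℕ} (y : Fin n → C.Pos)
    (h : ∀ i j, i ≠ j → S.mu (y i) (y j) = 0) :
    S.alphaPos (∑ i, y i) = ∑ i, S.alphaPos (y i) := by
  classical
  have key : ∀ s : Finset (Fin n),
      S.alphaPos (∑ i ∈ s, y i) = ∑ i ∈ s, S.alphaPos (y i) := by
    intro s
    induction s using Finset.induction_on with
    | empty => simpa using S.alphaPos_zero
    | insert _ _ hns ih =>
        rename_i a s
        rw [Finset.sum_insert hns, Finset.sum_insert hns, S.alphaPos_add, ih]
        have hmu0 : S.mu (y a) (∑ i ∈ s, y i) = 0 := by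
          rw [map_sum]
          refine Finset.sum_eq_zero fun i hi => ?_
          exact h a i (fun he => hns (he ▸ hi))
        rw [hmu0, map_zero, add_zero]
  exact key Finset.univ

lemma alphaPos_combo_zero {n : ℕ} (B : Fin n → C.Pos) (t : Fin n → ℤ)
    (hB : ∀ i, S.alphaPos (B i) = 0) (hmu : ∀ i j, S.mu (B i) (B j) = 0) :
    S.alphaPos (∑ i, t i • B i) = 0 := by
  rw [S.alphaPos_sum]
  · refine Finset.sum_eq_zero fun i _ => ?_
    exact S.alphaPos_zsmul_zero (hB i) (hmu i i) (t i)
  · intro i j _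
    rw [map_zsmul]
    simp [hmu i j]

end WallAux

/-- A hyperbolic family of size `k` in the Wall form `M`. -/
def IsHypFamily (M : WallForm P) {k : ℕ} (A : Fin k → M.carrier.Neg)
    (B : Fin k → M.carrier.Pos) : Prop :=
  (∀ i j, M.str.lam (A i) (B j) = if i = j then 1 else 0) ∧
  (∀ i j, M.str.mu (B i) (B j) = 0) ∧
  (∀ i, M.str.alphaNeg (A i) = 0) ∧
  (∀ i, M.str.alphaPos (B i) = 0)

lemma bilin_combo_left {A B C : Type} [AddCommGroup A] [AddCommGroup B] [AddCommGroup C]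
    (f : A →+ B →+ C) {m : ℕ} (a : Fin m → A) (s : Fin m → ℤ) (c : B) :
    f (∑ j, s j • a j) c = ∑ j, s j • f (a j) c := by
  rw [map_sum, AddMonoidHom.finset_sum_apply]
  refine Finset.sum_congr rfl fun j _ => ?_
  rw [map_zsmul, AddMonoidHom.smul_apply]

lemma bilin_combo_right {A B C : Type} [AddCommGroup A] [AddCommGroup B] [AddCommGroup C]
    (f : A →+ B →+ C) {n : ℕ} (b : Fin n → B) (t : Fin n → ℤ) (c : A) :
    f c (∑ l, t l • b l) = ∑ l, t l • f c (b l) := by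
  rw [map_sum]
  refine Finset.sum_congr rfl fun l _ => ?_
  rw [map_zsmul]

lemma bilin_combo {A B C : Type} [AddCommGroup A] [AddCommGroup B] [AddCommGroup C]
    (f : A →+ B →+ C) {m n : ℕ} (a : Fin m → A) (b : Fin n → B)
    (s : Fin m → ℤ) (t : Fin n → ℤ) :
    f (∑ j, s j • a j) (∑ l, t l • b l) = ∑ j, ∑ l, (s j * t l) • f (a j) (b l) := by
  rw [bilin_combo_left]
  refine Finset.sum_congr rfl fun j _ => ?_
  rw [bilin_combo_right, Finset.smul_sum]
  refine Finset.sum_congr rfl fun l _ => ?_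
  rw [smul_smul]

lemma IsHypFamily.transform {M : WallForm P} {k k' : ℕ}
    {A : Fin k → M.carrier.Neg} {B : Fin k → M.carrier.Pos}
    (hF : IsHypFamily M A B) (x y : Fin k' → Fin k → ℤ)
    (hxy : ∀ r s, (∑ j, x r j * y s j) = if r = s then 1 else 0) :
    IsHypFamily M (fun r => ∑ j, x r j • A j) (fun s => ∑ j, y s j • B j) := by
  obtain ⟨h1, h2, h3, h4⟩ := hF
  refine ⟨?_, ?_, ?_, ?_⟩
  · intro r s
    rw [bilin_combo]
    have : ∀ j, (∑ l, (x r j * y s l) • M.str.lam (A j) (B l)) = x r j * y s j := by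
      intro j
      rw [Finset.sum_congr rfl fun l _ => by rw [h1 j l]]
      simp [smul_eq_mul, mul_ite]
    rw [Finset.sum_congr rfl fun j _ => this j, hxy r s]
  · intro i j
    rw [bilin_combo]
    refine Finset.sum_eq_zero fun a _ => Finset.sum_eq_zero fun b _ => ?_
    rw [h2 a b, smul_zero]
  · intro r
    rw [map_sum]
    refine Finset.sum_eq_zero fun a _ => ?_
    rw [map_zsmul, h3 a, smul_zero]
  · intro s
    exact M.str.alphaPos_combo_zero B (y s) h4 h2

end Aux1
section Aux2

variable {H : Type} [AddCommGroup H] {P : FormParameter H}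

/-- The combination homomorphism on the negative part. -/
def comboNegHom (M : WallForm P) {k : ℕ} (A : Fin k → M.carrier.Neg) :
    (Fin k → ℤ) →+ M.carrier.Neg where
  toFun x := ∑ i, x i • A i
  map_zero' := by simp
  map_add' x y := by simp [add_smul, Finset.sum_add_distrib]

/-- The combination homomorphism on the positive part. -/
def comboPosHom (M : WallForm P) {k : ℕ} (A : Fin k → M.carrier.Neg)
    (B : Fin k → M.carrier.Pos) :
    ((Fin k → ℤ) × (Fin k → H)) →+ M.carrier.Pos where
  toFun w := ∑ i, w.1 i • B i + ∑ i, M.carrier.tau (A i) (w.2 i)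
  map_zero' := by simp
  map_add' w w' := by
    simp only [Prod.fst_add, Prod.snd_add, Pi.add_apply, add_smul, map_add,
      Finset.sum_add_distrib]
    abel

lemma rankGE_of_family [AddGroup.FG H] (M : WallForm P) {k : ℕ}
    (A : Fin k → M.carrier.Neg) (B : Fin k → M.carrier.Pos)
    (hF : IsHypFamily M A B) : rankGE M k := by
  classical
  obtain ⟨h1, h2, h3, h4⟩ := hF
  have hmuBt : ∀ (i j : Fin k) (h : H),
      M.str.mu (B i) (M.carrier.tau (A j) h) = P.eps • ((if j = i then (1:ℤ) else 0) • h) := by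
    intro i j h
    rw [M.str.mu_symm, M.str.mu_tau, h1 j i]
  have hmutB : ∀ (i j : Fin k) (h : H),
      M.str.mu (M.carrier.tau (A i) h) (B j) = (if i = j then (1:ℤ) else 0) • h := by
    intro i j h
    rw [M.str.mu_tau, h1 i j]
  have hmutt : ∀ (i j : Fin k) (h h' : H),
      M.str.mu (M.carrier.tau (A i) h) (M.carrier.tau (A j) h') = 0 := by
    intro i j h h'
    rw [M.str.mu_tau, M.str.lam_tau, zero_smul]
  refine ⟨⟨⟨comboNegHom M A, comboPosHom M A B, ?_⟩, ?_, ?_, ?_, ?_⟩⟩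
  · -- comm
    intro x h
    show (∑ i, (0 : Fin k → ℤ) i • B i + ∑ i, M.carrier.tau (A i) ((fun i => x i • h) i))
        = M.carrier.tau (∑ i, x i • A i) h
    rw [bilin_combo_left M.carrier.tau A x h]
    simp only [Pi.zero_apply, zero_smul, Finset.sum_const_zero, zero_add]
    refine Finset.sum_congr rfl fun i _ => ?_
    rw [map_zsmul]
  · -- lam
    intro x w
    show M.str.lam (∑ i, x i • A i)
        (∑ i, w.1 i • B i + ∑ i, M.carrier.tau (A i) (w.2 i)) = ∑ i, x i * w.1 i
    rw [map_add, bilin_combo M.str.lam A B x w.1]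
    have t2 : M.str.lam (∑ i, x i • A i) (∑ j, M.carrier.tau (A j) (w.2 j)) = 0 := by
      rw [map_sum]
      exact Finset.sum_eq_zero fun j _ => M.str.lam_tau _ _ _
    rw [t2, add_zero]
    refine Finset.sum_congr rfl fun i _ => ?_
    rw [Finset.sum_congr rfl fun j _ => by rw [h1 i j]]
    simp [smul_eq_mul, mul_ite]
  · -- mu
    intro w w'
    show M.str.mu (∑ i, w.1 i • B i + ∑ i, M.carrier.tau (A i) (w.2 i))
          (∑ i, w'.1 i • B i + ∑ i, M.carrier.tau (A i) (w'.2 i))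
        = (∑ i, w'.1 i • w.2 i) + P.eps • ∑ i, w.1 i • w'.2 i
    rw [map_add, map_add M.str.mu, AddMonoidHom.add_apply, AddMonoidHom.add_apply]
    have t11 : M.str.mu (∑ i, w.1 i • B i) (∑ i, w'.1 i • B i) = 0 := by
      rw [bilin_combo]
      exact Finset.sum_eq_zero fun a _ => Finset.sum_eq_zero fun b _ => by
        rw [h2 a b, smul_zero]
    have t12 : M.str.mu (∑ i, w.1 i • B i) (∑ i, M.carrier.tau (A i) (w'.2 i))
        = P.eps • ∑ i, w.1 i • w'.2 i := by
      rw [bilin_combo_left M.str.mu B w.1 _]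
      have hin : ∀ i, M.str.mu (B i) (∑ j, M.carrier.tau (A j) (w'.2 j))
          = P.eps • w'.2 i := by
        intro i
        rw [map_sum, Finset.sum_congr rfl fun j _ => hmuBt i j (w'.2 j), ← Finset.smul_sum]
        congr 1
        simp [ite_smul]
      rw [Finset.sum_congr rfl fun i _ => by rw [hin i],
        Finset.sum_congr rfl fun i _ => (smul_comm (w.1 i) P.eps (w'.2 i)),
        ← Finset.smul_sum]
    have t21 : M.str.mu (∑ i, M.carrier.tau (A i) (w.2 i)) (∑ i, w'.1 i • B i)
        = ∑ i, w'.1 i • w.2 i := by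
      rw [bilin_combo_right M.str.mu B w'.1 _]
      have hin : ∀ j, M.str.mu (∑ i, M.carrier.tau (A i) (w.2 i)) (B j) = w.2 j := by
        intro j
        rw [map_sum, AddMonoidHom.finset_sum_apply,
          Finset.sum_congr rfl fun i _ => hmutB i j (w.2 i)]
        simp [ite_smul]
      exact Finset.sum_congr rfl fun j _ => by rw [hin j]
    have t22 : M.str.mu (∑ i, M.carrier.tau (A i) (w.2 i))
        (∑ i, M.carrier.tau (A i) (w'.2 i)) = 0 := by
      rw [map_sum]
      refine Finset.sum_eq_zero fun j _ => ?_
      rw [map_sum, AddMonoidHom.finset_sum_apply]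
      exact Finset.sum_eq_zero fun i _ => hmutt i j _ _
    rw [t11, t12, t21, t22]
    abel
  · -- alphaNeg
    intro x
    show M.str.alphaNeg (∑ i, x i • A i) = 0
    rw [map_sum]
    exact Finset.sum_eq_zero fun i _ => by rw [map_zsmul, h3 i, smul_zero]
  · -- alphaPos
    intro w
    show M.str.alphaPos (∑ i, w.1 i • B i + ∑ i, M.carrier.tau (A i) (w.2 i))
        = P.bd (∑ i, w.1 i • w.2 i)
    rw [← Finset.sum_add_distrib]
    rw [M.str.alphaPos_sum]
    · have hyi : ∀ i, M.str.alphaPos (w.1 i • B i + M.carrier.tau (A i) (w.2 i))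
          = P.bd (w.1 i • w.2 i) := by
        intro i
        rw [M.str.alphaPos_add, M.str.alphaPos_zsmul_zero (h4 i) (h2 i i),
          M.str.alphaPos_tau, h3 i]
        have hG : P.G.tau 0 (w.2 i) = 0 := by rw [map_zero]; rfl
        rw [hG]
        have hmu : M.str.mu (w.1 i • B i) (M.carrier.tau (A i) (w.2 i))
            = w.1 i • (P.eps • w.2 i) := by
          rw [map_zsmul, AddMonoidHom.smul_apply, hmuBt i i (w.2 i)]
          simp
        rw [hmu, smul_comm, P.bd_eps]
        simp
      rw [Finset.sum_congr rfl fun i _ => hyi i, ← map_sum]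
    · intro i j hij
      rw [map_add, map_add M.str.mu, AddMonoidHom.add_apply, AddMonoidHom.add_apply]
      have u1 : M.str.mu (w.1 i • B i) (w.1 j • B j) = 0 := by
        rw [map_zsmul M.str.mu, AddMonoidHom.smul_apply, map_zsmul, h2 i j]
        simp
      have u2 : M.str.mu (w.1 i • B i) (M.carrier.tau (A j) (w.2 j)) = 0 := by
        rw [map_zsmul M.str.mu, AddMonoidHom.smul_apply, hmuBt i j,
          if_neg (Ne.symm hij)]
        simp
      have u3 : M.str.mu (M.carrier.tau (A i) (w.2 i)) (w.1 j • B j) = 0 := by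
        rw [map_zsmul, hmutB i j, if_neg hij]
        simp
      have u4 : M.str.mu (M.carrier.tau (A i) (w.2 i)) (M.carrier.tau (A j) (w.2 j)) = 0 :=
        hmutt i j _ _
      rw [u1, u2, u3, u4]
      simp

lemma stdWall_lam [AddGroup.FG H] {k : ℕ} (x : (stdWall P k).carrier.Neg)
    (w : (stdWall P k).carrier.Pos) :
    (stdWall P k).str.lam x w = ∑ i, x i * w.1 i := rfl

lemma stdWall_mu [AddGroup.FG H] {k : ℕ} (w w' : (stdWall P k).carrier.Pos) :
    (stdWall P k).str.mu w w'
      = (∑ i, w'.1 i • w.2 i) + P.eps • ∑ i, w.1 i • w'.2 i := rfl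

lemma stdWall_alphaNeg [AddGroup.FG H] {k : ℕ} (x : (stdWall P k).carrier.Neg) :
    (stdWall P k).str.alphaNeg x = 0 := rfl

lemma stdWall_alphaPos [AddGroup.FG H] {k : ℕ} (w : (stdWall P k).carrier.Pos) :
    (stdWall P k).str.alphaPos w = P.bd (∑ i, w.1 i • w.2 i) := rfl

lemma family_of_rankGE [AddGroup.FG H] (M : WallForm P) {k : ℕ}
    (hom : WallHom (stdWall P k) M) :
    IsHypFamily M (fun i => hom.hom.neg (Pi.single i 1))
      (fun i => hom.hom.pos (Pi.single i 1, 0)) := by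
  classical
  obtain ⟨hl, hm, hn, hp⟩ := hom.isWall
  refine ⟨fun i j => ?_, fun i j => ?_, fun i => ?_, fun i => ?_⟩
  · erw [hl, stdWall_lam]
    simp [Pi.single_apply, Finset.sum_ite_eq, eq_comm]
  · erw [hm, stdWall_mu]
    simp
  · erw [hn, stdWall_alphaNeg]
  · erw [hp, stdWall_alphaPos]
    simp

lemma rankGE_zero [AddGroup.FG H] (M : WallForm P) : rankGE M 0 :=
  rankGE_of_family M Fin.elim0 Fin.elim0
    ⟨fun i => i.elim0, fun i => i.elim0, fun i => i.elim0, fun i => i.elim0⟩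

end Aux2
section Aux3

open Module

lemma exists_dual_system (k d : ℕ) (φ : (Fin k → ℤ) →ₗ[ℤ] (Fin d → ℤ)) :
    ∃ x y : Fin (k - d) → (Fin k → ℤ),
      (∀ r, φ (x r) = 0) ∧ ∀ r s, (∑ j, x r j * y s j) = if r = s then 1 else 0 := by
  classical
  obtain ⟨s, hs⟩ := Module.projective_lifting_property (φ.rangeRestrict) LinearMap.id
    φ.surjective_rangeRestrict
  have hs' : ∀ b, φ.rangeRestrict (s b) = b := by
    intro b
    have := congrFun (congrArg DFunLike.coe hs) b
    exact this
  -- p : projection onto ker φ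
  let p : (Fin k → ℤ) →ₗ[ℤ] (Fin k → ℤ) := LinearMap.id - s.comp φ.rangeRestrict
  have hpker : ∀ z, φ (p z) = 0 := by
    intro z
    have h1 : φ.rangeRestrict (p z) = 0 := by
      simp [p, map_sub, hs' (φ.rangeRestrict z)]
    simpa [LinearMap.rangeRestrict] using congrArg Subtype.val h1
  have hpfix : ∀ z ∈ LinearMap.ker φ, p z = z := by
    intro z hz
    have : φ.rangeRestrict z = 0 := Subtype.ext (by simpa using hz)
    simp [p, this]
  -- the equivalence: Fin k → ℤ ≃ ker × range
  let e : (Fin k → ℤ) →ₗ[ℤ] (LinearMap.ker φ × LinearMap.range φ) :=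
    LinearMap.prod (p.codRestrict (LinearMap.ker φ) (fun z => hpker z)) φ.rangeRestrict
  let e' : (LinearMap.ker φ × LinearMap.range φ) →ₗ[ℤ] (Fin k → ℤ) :=
    ((LinearMap.ker φ).subtype.comp (LinearMap.fst ℤ _ _)) + (s.comp (LinearMap.snd ℤ _ _))
  have he : ∀ z, e' (e z) = z := by
    intro z
    simp [e, e', p]
    erw [LinearMap.codRestrict_apply]
    simp
  have he2 : ∀ w, e (e' w) = w := by
    rintro ⟨⟨a, ha⟩, b⟩
    have hsa : φ.rangeRestrict a = 0 := Subtype.ext (by simpa using ha)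
    refine Prod.ext (Subtype.ext ?_) ?_
    · simp only [e, e', LinearMap.prod_apply, LinearMap.add_apply, LinearMap.comp_apply,
        LinearMap.fst_apply, LinearMap.snd_apply, Submodule.subtype_apply,
        LinearMap.codRestrict_apply, Pi.prod, Function.prod, map_add]
      have h2 : p (s b) = 0 := by simp [p, hs' b]
      simp only [Prod.fst_add, Submodule.coe_add, LinearMap.codRestrict_apply]
      erw [LinearMap.codRestrict_apply, LinearMap.codRestrict_apply, h2, hpfix a ha, add_zero]
    · simp [e, e', map_add, hsa, hs' b]
  let E : (Fin k → ℤ) ≃ₗ[ℤ] (LinearMap.ker φ × LinearMap.range φ) :=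
    LinearEquiv.ofLinear e e' (by ext w <;> simp [he2]) (by ext z; simp [he])
  -- finrank bookkeeping
  have hrank : finrank ℤ (LinearMap.ker φ) + finrank ℤ (LinearMap.range φ) = k := by
    have := E.finrank_eq
    rw [finrank_prod] at this
    simpa using this.symm
  have hrle : finrank ℤ (LinearMap.range φ) ≤ d := by
    have := Submodule.finrank_le (LinearMap.range φ)
    simpa using this
  have hK : k - d ≤ finrank ℤ (LinearMap.ker φ) := by omega
  let b := Module.finBasis ℤ (LinearMap.ker φ)
  let ι : Fin (k - d) → Fin (finrank ℤ (LinearMap.ker φ)) := Fin.castLE hK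
  refine ⟨fun r => (b (ι r) : Fin k → ℤ),
    fun t => fun j => (b.coord (ι t)) (p.codRestrict (LinearMap.ker φ) hpker (Pi.single j 1)),
    fun r => (b (ι r)).2, ?_⟩
  intro r s
  have key : ∀ z : LinearMap.ker φ,
      (∑ j, (z : Fin k → ℤ) j * (b.coord (ι s)) (p.codRestrict (LinearMap.ker φ) hpker (Pi.single j 1)))
        = (b.coord (ι s)) z := by
    intro z
    have hz : (z : Fin k → ℤ) = ∑ j, ((z : Fin k → ℤ) j) • Pi.single j 1 := by
      funext t
      simp [Finset.sum_apply, Pi.single_apply, Finset.sum_ite_eq']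
    calc (∑ j, (z : Fin k → ℤ) j * (b.coord (ι s)) (p.codRestrict (LinearMap.ker φ) hpker (Pi.single j 1)))
        = (b.coord (ι s)) (p.codRestrict (LinearMap.ker φ) hpker (∑ j, ((z : Fin k → ℤ) j) • Pi.single j 1)) := by
          rw [map_sum, map_sum]
          refine Finset.sum_congr rfl fun j _ => ?_
          rw [map_smul, map_smul, smul_eq_mul]
      _ = (b.coord (ι s)) z := by
          rw [← hz]
          congr 1
          exact Subtype.ext (hpfix _ z.2)
  rw [key (b (ι r))]
  rw [Basis.coord_apply, b.repr_self]
  simp [Finsupp.single_apply, ι, Fin.castLE, Fin.val_eq_val]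


/-- The linear map with prescribed rows. -/
def rowsL {k d : ℕ} (w : Fin k → Fin d → ℤ) : (Fin k → ℤ) →ₗ[ℤ] (Fin d → ℤ) where
  toFun t := ∑ j, t j • w j
  map_add' a b := by simp [add_smul, Finset.sum_add_distrib]
  map_smul' c a := by
    simp only [Pi.smul_apply, smul_eq_mul, RingHom.id_apply, Finset.smul_sum, mul_smul]

lemma exists_dlen_surj (H : Type) [AddCommGroup H] [AddGroup.FG H] :
    ∃ ρ : (Fin (dlen H) → ℤ) →+ H, Function.Surjective ρ := by
  have hne : {k : ℕ | ∃ φ : (Fin k → ℤ) →+ H, Function.Surjective φ}.Nonempty := by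
    haveI : Module.Finite ℤ H := Module.Finite.iff_addGroup_fg.mpr ‹AddGroup.FG H›
    obtain ⟨n, s, hs⟩ := Module.Finite.exists_fin (R := ℤ) (M := H)
    refine ⟨n, { toFun := fun t => ∑ i, t i • s i,
                 map_zero' := by simp,
                 map_add' := by intro a b; simp [add_smul, Finset.sum_add_distrib] }, ?_⟩
    intro h
    have hmem : h ∈ Submodule.span ℤ (Set.range s) := by rw [hs]; trivial
    rw [Submodule.mem_span_range_iff_exists_fun] at hmem
    obtain ⟨c, hc⟩ := hmem
    exact ⟨c, hc⟩
  exact Nat.sInf_mem hne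

end Aux3
section Aux4

variable {H : Type} [AddCommGroup H] {P : FormParameter H}

lemma dual_swap {k k' : ℕ} {x y : Fin k' → Fin k → ℤ}
    (hxy : ∀ r s, (∑ j, x r j * y s j) = if r = s then 1 else 0) :
    ∀ r s, (∑ j, y r j * x s j) = if r = s then 1 else 0 := by
  intro r s
  rw [Finset.sum_congr rfl fun j _ => mul_comm (y r j) (x s j), hxy s r]
  by_cases h : r = s
  · simp [h]
  · simp [h, Ne.symm h]

/-- Kill a `ℤ^{d'}`-valued functional on the `B`-side of a hyperbolic family. -/
lemma stage_killB (M : WallForm P) {k d' : ℕ} {A : Fin k → M.carrier.Neg}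
    {B : Fin k → M.carrier.Pos} (hF : IsHypFamily M A B) (c : Fin k → Fin d' → ℤ) :
    ∃ x y : Fin (k - d') → Fin k → ℤ,
      IsHypFamily M (fun r => ∑ j, y r j • A j) (fun r => ∑ j, x r j • B j) ∧
      (∀ r, (∑ j, x r j • c j) = 0) := by
  obtain ⟨x, y, hx, hxy⟩ := exists_dual_system k d' (rowsL c)
  exact ⟨x, y, hF.transform y x (dual_swap hxy), fun r => hx r⟩

/-- Kill a `ℤ^{d'}`-valued functional on the `A`-side of a hyperbolic family. -/
lemma stage_killA (M : WallForm P) {k d' : ℕ} {A : Fin k → M.carrier.Neg}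
    {B : Fin k → M.carrier.Pos} (hF : IsHypFamily M A B) (c : Fin k → Fin d' → ℤ) :
    ∃ x y : Fin (k - d') → Fin k → ℤ,
      IsHypFamily M (fun r => ∑ j, x r j • A j) (fun r => ∑ j, y r j • B j) ∧
      (∀ r, (∑ j, x r j • c j) = 0) := by
  obtain ⟨x, y, hx, hxy⟩ := exists_dual_system k d' (rowsL c)
  exact ⟨x, y, hF.transform x y hxy, fun r => hx r⟩

lemma row1_eval {k : ℕ} (x : Fin k → ℤ) (c : Fin k → ℤ)
    (h : (∑ j, x j • (fun _ : Fin 1 => c j)) = 0) : (∑ j, x j * c j) = 0 := by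
  have h0 := congrFun h 0
  simpa [Finset.sum_apply, smul_eq_mul] using h0

lemma combo_mem {G : Type} [AddCommGroup G] (S : AddSubgroup G) {n : ℕ}
    (a : Fin n → G) (t : Fin n → ℤ) (h : ∀ i, a i ∈ S) : (∑ i, t i • a i) ∈ S :=
  AddSubgroup.sum_mem S fun i _ => AddSubgroup.zsmul_mem S (h i) (t i)

lemma master [AddGroup.FG H] (M : WallForm P) (N : SubPair M.carrier)
    (f : WallHom (stdWall P 1) M) {g : ℕ}
    (A : Fin g → M.carrier.Neg) (B : Fin g → M.carrier.Pos)
    (hF : IsHypFamily M A B) (hAN : ∀ i, A i ∈ N.neg) (hBN : ∀ i, B i ∈ N.pos) :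
    ∃ (A' : Fin (g - 2 - dlen H) → M.carrier.Neg)
      (B' : Fin (g - 2 - dlen H) → M.carrier.Pos),
      IsHypFamily M A' B' ∧
      (∀ i, A' i ∈ (N.inf (f.hom.rangeSub.perp M.str)).neg) ∧
      (∀ i, B' i ∈ (N.inf (f.hom.rangeSub.perp M.str)).pos) := by
  classical
  obtain ⟨ρ, hρ⟩ := exists_dlen_surj H
  set u : M.carrier.Neg := f.hom.neg (Pi.single 0 1) with hu
  set v : M.carrier.Pos := f.hom.pos (Pi.single 0 1, 0) with hv
  have hdecNeg : ∀ t : Fin 1 → ℤ, f.hom.neg t = t 0 • u := by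
    intro t
    have ht : t = t 0 • Pi.single 0 1 := by
      funext i
      have hi : i = (0 : Fin 1) := Subsingleton.elim i 0
      subst hi
      simp
    conv_lhs => rw [ht]
    erw [map_zsmul, hu]
  have hdecPos : ∀ w : (stdWall P 1).carrier.Pos,
      f.hom.pos w = w.1 0 • v + M.carrier.tau u (w.2 0) := by
    intro w
    have hT : (stdWall P 1).carrier.tau (Pi.single 0 1) (w.2 0)
        = ((0 : Fin 1 → ℤ), fun i => (Pi.single 0 1 : Fin 1 → ℤ) i • w.2 0) := rfl
    have hw : w = w.1 0 • ((Pi.single 0 1 : Fin 1 → ℤ), (0 : Fin 1 → H))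
        + ((0 : Fin 1 → ℤ), fun i => (Pi.single 0 1 : Fin 1 → ℤ) i • w.2 0) := by
      refine Prod.ext ?_ ?_
      · funext i
        have hi : i = (0 : Fin 1) := Subsingleton.elim i 0
        subst hi
        show w.1 0 = (w.1 0 • (Pi.single 0 1 : Fin 1 → ℤ) + (0 : Fin 1 → ℤ)) 0
        simp
      · funext i
        have hi : i = (0 : Fin 1) := Subsingleton.elim i 0
        subst hi
        show w.2 0 = (w.1 0 • (0 : Fin 1 → H)
            + fun i => (Pi.single 0 1 : Fin 1 → ℤ) i • w.2 0) 0
        simp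
    rw [← hT] at hw
    conv_lhs => rw [hw]
    erw [map_add, map_zsmul, f.hom.comm, hu, hv]
  have huv : M.str.lam u v = 1 := by
    have h := f.isWall.1 (Pi.single 0 1) (Pi.single 0 1, 0)
    erw [stdWall_lam] at h
    rw [hu, hv, h]
    simp
  have hperpN : ∀ z : M.carrier.Neg, M.str.lam z v = 0 →
      z ∈ (f.hom.rangeSub.perp M.str).neg := by
    intro z hz w hw
    obtain ⟨w0, rfl⟩ := hw
    rw [hdecPos w0, map_add, map_zsmul, hz, smul_zero, M.str.lam_tau, add_zero]
  have hperpP : ∀ z : M.carrier.Pos, M.str.lam u z = 0 → M.str.mu z v = 0 →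
      z ∈ (f.hom.rangeSub.perp M.str).pos := by
    intro z h1z h2z
    refine ⟨?_, ?_⟩
    · intro t ht
      obtain ⟨t0, rfl⟩ := ht
      rw [hdecNeg t0, map_zsmul M.str.lam, AddMonoidHom.smul_apply, h1z, smul_zero]
    · intro w hw
      obtain ⟨w0, rfl⟩ := hw
      rw [hdecPos w0, map_add, map_zsmul, h2z, smul_zero, zero_add,
        M.str.mu_symm, M.str.mu_tau, h1z, zero_smul, smul_zero]
  -- Stage 1 : kill m(y) = lam u y on the B side
  obtain ⟨x1, y1, hF1, hk1⟩ := stage_killB M hF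
    (fun j => fun _ : Fin 1 => M.str.lam u (B j))
  set A1 : Fin (g - 1) → M.carrier.Neg := fun r => ∑ j, y1 r j • A j with hA1
  set B1 : Fin (g - 1) → M.carrier.Pos := fun r => ∑ j, x1 r j • B j with hB1
  have hm1 : ∀ r, M.str.lam u (B1 r) = 0 := by
    intro r
    simp only [hB1]
    rw [bilin_combo_right M.str.lam B (x1 r) u]
    exact row1_eval (x1 r) _ (hk1 r)
  have hAN1 : ∀ r, A1 r ∈ N.neg := fun r => combo_mem N.neg A (y1 r) hAN
  have hBN1 : ∀ r, B1 r ∈ N.pos := fun r => combo_mem N.pos B (x1 r) hBN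
  -- Stage 2 : kill l(z) = lam z v on the A side
  obtain ⟨x2, y2, hF2, hk2⟩ := stage_killA M hF1
    (fun j => fun _ : Fin 1 => M.str.lam (A1 j) v)
  set A2 : Fin (g - 1 - 1) → M.carrier.Neg := fun r => ∑ j, x2 r j • A1 j with hA2
  set B2 : Fin (g - 1 - 1) → M.carrier.Pos := fun r => ∑ j, y2 r j • B1 j with hB2
  have hl2 : ∀ r, M.str.lam (A2 r) v = 0 := by
    intro r
    simp only [hA2]
    rw [bilin_combo_left M.str.lam A1 (x2 r) v]
    exact row1_eval (x2 r) _ (hk2 r)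
  have hm2 : ∀ r, M.str.lam u (B2 r) = 0 := by
    intro r
    simp only [hB2]
    rw [bilin_combo_right M.str.lam B1 (y2 r) u]
    exact Finset.sum_eq_zero fun j _ => by rw [hm1 j, smul_zero]
  have hAN2 : ∀ r, A2 r ∈ N.neg := fun r => combo_mem N.neg A1 (x2 r) hAN1
  have hBN2 : ∀ r, B2 r ∈ N.pos := fun r => combo_mem N.pos B1 (y2 r) hBN1
  -- Stage 3 : kill q(y) = mu y v on the B side, at cost dlen H
  have hwex : ∀ j, ∃ w : Fin (dlen H) → ℤ, ρ w = M.str.mu (B2 j) v := fun j => hρ _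
  choose w hwρ using hwex
  obtain ⟨x3, y3, hF3, hk3⟩ := stage_killB M hF2 w
  set A3 : Fin (g - 1 - 1 - dlen H) → M.carrier.Neg :=
    fun r => ∑ j, y3 r j • A2 j with hA3
  set B3 : Fin (g - 1 - 1 - dlen H) → M.carrier.Pos :=
    fun r => ∑ j, x3 r j • B2 j with hB3
  have hq3 : ∀ r, M.str.mu (B3 r) v = 0 := by
    intro r
    simp only [hB3]
    rw [bilin_combo_left M.str.mu B2 (x3 r) v]
    have hj : ∀ j, M.str.mu (B2 j) v = ρ (w j) := fun j => (hwρ j).symm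
    calc (∑ j, x3 r j • M.str.mu (B2 j) v) = ∑ j, x3 r j • ρ (w j) :=
          Finset.sum_congr rfl fun j _ => by rw [hj j]
      _ = ρ (∑ j, x3 r j • w j) := by
          rw [map_sum]
          exact Finset.sum_congr rfl fun j _ => (map_zsmul ρ _ _).symm
      _ = 0 := by rw [hk3 r, map_zero]
  have hl3 : ∀ r, M.str.lam (A3 r) v = 0 := by
    intro r
    simp only [hA3]
    rw [bilin_combo_left M.str.lam A2 (y3 r) v]
    exact Finset.sum_eq_zero fun j _ => by rw [hl2 j, smul_zero]
  have hm3 : ∀ r, M.str.lam u (B3 r) = 0 := by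
    intro r
    simp only [hB3]
    rw [bilin_combo_right M.str.lam B2 (x3 r) u]
    exact Finset.sum_eq_zero fun j _ => by rw [hm2 j, smul_zero]
  have hAN3 : ∀ r, A3 r ∈ N.neg := fun r => combo_mem N.neg A2 (y3 r) hAN2
  have hBN3 : ∀ r, B3 r ∈ N.pos := fun r => combo_mem N.pos B2 (x3 r) hBN2
  have hsz : g - 2 - dlen H = g - 1 - 1 - dlen H := by omega
  rw [hsz]
  exact ⟨A3, B3, hF3, fun i => ⟨hAN3 i, hperpN _ (hl3 i)⟩,
    fun i => ⟨hBN3 i, hperpP _ (hm3 i) (hq3 i)⟩⟩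

end Aux4
section Aux5

variable {H : Type} [AddCommGroup H] {P : FormParameter H}

lemma rankGE_toWall_of_family [AddGroup.FG H] (M : WallForm P) (S : SubPair M.carrier)
    {k : ℕ} (A : Fin k → M.carrier.Neg) (B : Fin k → M.carrier.Pos)
    (hF : IsHypFamily M A B) (hA : ∀ i, A i ∈ S.neg) (hB : ∀ i, B i ∈ S.pos) :
    rankGE S.toWall k := by
  refine rankGE_of_family S.toWall (fun i => ⟨A i, hA i⟩) (fun i => ⟨B i, hB i⟩) ?_
  obtain ⟨h1, h2, h3, h4⟩ := hF
  exact ⟨fun i j => h1 i j, fun i j => h2 i j, fun i => h3 i, fun i => h4 i⟩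

lemma IsHypFamily.of_toWall (M : WallForm P) (S : SubPair M.carrier) {k : ℕ}
    {A : Fin k → S.toWall.carrier.Neg} {B : Fin k → S.toWall.carrier.Pos}
    (hF : IsHypFamily S.toWall A B) :
    IsHypFamily M (fun i => (A i).1) (fun i => (B i).1) :=
  ⟨fun i j => hF.1 i j, fun i j => hF.2.1 i j, fun i => hF.2.2.1 i, fun i => hF.2.2.2 i⟩

/-- Composition of Wall form morphisms. -/
def WallHom.comp {M N K : WallForm P} (f : WallHom M N) (g : WallHom N K) :
    WallHom M K where
  hom :=
    { neg := g.hom.neg.comp f.hom.neg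
      pos := g.hom.pos.comp f.hom.pos
      comm := by
        intro x h
        simp only [AddMonoidHom.comp_apply]
        rw [f.hom.comm, g.hom.comm] }
  isWall := by
    refine ⟨fun x y => ?_, fun y y' => ?_, fun x => ?_, fun y => ?_⟩
    · simp only [AddMonoidHom.comp_apply]
      rw [g.isWall.1, f.isWall.1]
    · simp only [AddMonoidHom.comp_apply]
      rw [g.isWall.2.1, f.isWall.2.1]
    · simp only [AddMonoidHom.comp_apply]
      rw [g.isWall.2.2.1, f.isWall.2.2.1]
    · simp only [AddMonoidHom.comp_apply]
      rw [g.isWall.2.2.2, f.isWall.2.2.2]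

/-- The left inclusion into an orthogonal direct sum is a Wall form morphism. -/
def WallHom.sumInl (M W : WallForm P) : WallHom M (M.sum W) where
  hom := HPairHom.inl M.carrier W.carrier
  isWall := by
    refine ⟨fun x y => ?_, fun y y' => ?_, fun x => ?_, fun y => ?_⟩
    · show M.str.lam x y + W.str.lam 0 0 = M.str.lam x y
      simp
    · show M.str.mu y y' + W.str.mu 0 0 = M.str.mu y y'
      simp
    · show M.str.alphaNeg x + W.str.alphaNeg 0 = M.str.alphaNeg x
      simp
    · show M.str.alphaPos y + W.str.alphaPos 0 = M.str.alphaPos y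
      rw [W.str.alphaPos_zero, add_zero]

/-- Extending a sub-pair by a full factor. -/
def SubPair.prodTop {C : HPair H} (N : SubPair C) (D : HPair H) : SubPair (C.sum D) where
  neg := N.neg.prod ⊤
  pos := N.pos.prod ⊤
  tau_mem := by
    rintro ⟨x1, x2⟩ ⟨hx1, -⟩ h
    exact ⟨N.tau_mem x1 hx1 h, trivial⟩

end Aux5
/-- For a sub-Wall form `N ≤ M` with `r(N) ≥ g ≥ d(H)` and
a morphism `f : W → M`, one has `r(N ∩ f(W)^⊥) ≥ g - 2 - d`; similarly for
the stable rank. -/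
theorem statement_15 {H : Type} [AddCommGroup H] [AddGroup.FG H]
    (P : FormParameter H) (M : WallForm P) (N : SubPair M.carrier) (g : ℕ)
    (hgd : dlen H ≤ g) (f : WallHom (stdWall P 1) M) :
    (rankGE N.toWall g →
      rankGE (N.inf (f.hom.rangeSub.perp M.str)).toWall (g - 2 - dlen H)) ∧
    (srankGE N.toWall g →
      srankGE (N.inf (f.hom.rangeSub.perp M.str)).toWall (g - 2 - dlen H)) := by
  constructor
  · intro h
    obtain ⟨hom⟩ := h
    have hfam := (family_of_rankGE N.toWall hom).of_toWall M N
    obtain ⟨A', B', hF', hA', hB'⟩ := master M N f _ _ hfam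
      (fun i => (hom.hom.neg (Pi.single i 1)).2)
      (fun i => (hom.hom.pos (Pi.single i 1, 0)).2)
    exact rankGE_toWall_of_family M _ A' B' hF' hA' hB'
  · rintro ⟨j, hj⟩
    by_cases hbig : 2 + dlen H ≤ g
    · obtain ⟨hom⟩ := hj
      have hfam0 := family_of_rankGE (N.toWall.sum (stdWall P j)) hom
      set Am : Fin (g + j) → (M.sum (stdWall P j)).carrier.Neg :=
        fun i => ((hom.hom.neg (Pi.single i 1)).1.1, (hom.hom.neg (Pi.single i 1)).2)
        with hAmdef
      set Bm : Fin (g + j) → (M.sum (stdWall P j)).carrier.Pos :=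
        fun i => ((hom.hom.pos (Pi.single i 1, 0)).1.1, (hom.hom.pos (Pi.single i 1, 0)).2)
        with hBmdef
      have hfamM : IsHypFamily (M.sum (stdWall P j)) Am Bm :=
        ⟨fun i j' => hfam0.1 i j', fun i j' => hfam0.2.1 i j',
         fun i => hfam0.2.2.1 i, fun i => hfam0.2.2.2 i⟩
      have hAmN : ∀ i, Am i ∈ (N.prodTop (stdWall P j).carrier).neg :=
        fun i => ⟨(hom.hom.neg (Pi.single i 1)).1.2, trivial⟩
      have hBmN : ∀ i, Bm i ∈ (N.prodTop (stdWall P j).carrier).pos :=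
        fun i => ⟨(hom.hom.pos (Pi.single i 1, 0)).1.2, trivial⟩
      obtain ⟨A3, B3, hF3, hA3, hB3⟩ :=
        master (M.sum (stdWall P j)) (N.prodTop (stdWall P j).carrier)
          (f.comp (WallHom.sumInl M (stdWall P j))) Am Bm hfamM hAmN hBmN
      have hA3m : ∀ i, (A3 i).1 ∈ (N.inf (f.hom.rangeSub.perp M.str)).neg := by
        intro i
        obtain ⟨⟨hN1, -⟩, hperp⟩ := hA3 i
        refine ⟨hN1, ?_⟩
        intro w hw
        obtain ⟨w0, rfl⟩ := hw
        have h3 : M.str.lam (A3 i).1 (f.hom.pos w0)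
            + (stdWall P j).str.lam (A3 i).2 0 = 0 :=
          hperp ((f.comp (WallHom.sumInl M (stdWall P j))).hom.pos w0) ⟨w0, rfl⟩
        rw [stdWall_lam] at h3
        erw [Prod.fst_zero] at h3
        simpa using h3
      have hB3m : ∀ i, (B3 i).1 ∈ (N.inf (f.hom.rangeSub.perp M.str)).pos := by
        intro i
        obtain ⟨⟨hN1, -⟩, hperp1, hperp2⟩ := hB3 i
        refine ⟨hN1, fun z hz => ?_, fun w hw => ?_⟩
        · obtain ⟨t0, rfl⟩ := hz
          have h3 : M.str.lam (f.hom.neg t0) (B3 i).1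
              + (stdWall P j).str.lam (0 : Fin j → ℤ) (B3 i).2 = 0 :=
            hperp1 ((f.comp (WallHom.sumInl M (stdWall P j))).hom.neg t0) ⟨t0, rfl⟩
          erw [stdWall_lam] at h3
          simpa using h3
        · obtain ⟨w0, rfl⟩ := hw
          have h3 : M.str.mu (B3 i).1 (f.hom.pos w0)
              + (stdWall P j).str.mu (B3 i).2 0 = 0 :=
            hperp2 ((f.comp (WallHom.sumInl M (stdWall P j))).hom.pos w0) ⟨w0, rfl⟩
          rw [stdWall_mu] at h3
          erw [Prod.fst_zero, Prod.snd_zero] at h3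
          simpa using h3
      refine ⟨j, ?_⟩
      have hsz : g - 2 - dlen H + j = g + j - 2 - dlen H := by omega
      rw [hsz]
      refine rankGE_of_family _ (fun i => (⟨(A3 i).1, hA3m i⟩, (A3 i).2))
        (fun i => (⟨(B3 i).1, hB3m i⟩, (B3 i).2)) ?_
      exact ⟨fun i j' => hF3.1 i j', fun i j' => hF3.2.1 i j',
        fun i => hF3.2.2.1 i, fun i => hF3.2.2.2 i⟩
    · have h0 : g - 2 - dlen H = 0 := by omega
      rw [h0]
      exact ⟨0, rankGE_zero _⟩
end

section
/- Let M be a Wall form with stable rank r̄(M) ≥ 2 + d, where d = d(H). Then there exists at least one Wall form morphism W → M (equivalently, the complex L(M) is non-empty). -/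
section Proof16

variable {H : Type} [AddCommGroup H] {P : FormParameter H}
variable [AddGroup.FG H]

omit [AddGroup.FG H] in
lemma wallAux_alphaPos_zero {C : HPair H} (S : WallAux P C) : S.alphaPos 0 = 0 := by
  have h := S.alphaPos_add 0 0
  simp only [add_zero, map_zero, AddMonoidHom.zero_apply] at h
  exact right_eq_add.mp h

omit [AddGroup.FG H] in
lemma wallAux_alphaPos_neg {C : HPair H} (S : WallAux P C) {y : C.Pos}
    (hmu : S.mu y y = 0) (ha : S.alphaPos y = 0) : S.alphaPos (-y) = 0 := by
  have h := S.alphaPos_add y (-y)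
  simp only [add_neg_cancel, wallAux_alphaPos_zero, ha, map_neg, AddMonoidHom.neg_apply,
    hmu, neg_zero, map_zero, zero_add, add_zero] at h
  exact h.symm

omit [AddGroup.FG H] in
lemma wallAux_alphaPos_zsmul {C : HPair H} (S : WallAux P C) {y : C.Pos}
    (hmu : S.mu y y = 0) (ha : S.alphaPos y = 0) (n : ℤ) : S.alphaPos (n • y) = 0 := by
  induction n using Int.induction_on with
  | zero => simpa using wallAux_alphaPos_zero S
  | succ i ih =>
      rw [add_smul, one_smul, S.alphaPos_add, ih, ha, map_zsmul, AddMonoidHom.smul_apply,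
        hmu, smul_zero, map_zero]
      simp
  | pred i ih =>
      rw [sub_smul, one_smul, sub_eq_add_neg, S.alphaPos_add, ih,
        wallAux_alphaPos_neg S hmu ha, map_zsmul, AddMonoidHom.smul_apply, map_neg, hmu,
        neg_zero, smul_zero, map_zero]
      simp

/-- A single hyperbolic pair `(m, u)` in a Wall form induces a morphism `W → M`. -/
noncomputable def wallHomOfPair (M : WallForm P) (m : M.carrier.Neg) (u : M.carrier.Pos)
    (hlam : M.str.lam m u = 1) (hmu : M.str.mu u u = 0)
    (han : M.str.alphaNeg m = 0) (hap : M.str.alphaPos u = 0) :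
    WallHom (stdWall P 1) M where
  hom :=
    { neg :=
        { toFun := fun c => c 0 • m
          map_zero' := by
            show (0 : (stdWall P 1).carrier.Neg) 0 • m = 0
            rw [show (0 : (stdWall P 1).carrier.Neg) 0 = (0 : ℤ) from rfl, zero_smul]
          map_add' := by
            intro a b
            show (a + b) 0 • m = a 0 • m + b 0 • m
            rw [show (a + b) 0 = a 0 + b 0 from rfl, add_smul] }
      pos :=
        { toFun := fun w => w.1 0 • u + M.carrier.tau m (w.2 0)
          map_zero' := by
            show (0 : Fin 1 → ℤ) 0 • u + M.carrier.tau m ((0 : Fin 1 → H) 0) = 0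
            simp
          map_add' := by
            intro a b
            show (a + b).1 0 • u + M.carrier.tau m ((a + b).2 0)
                = (a.1 0 • u + M.carrier.tau m (a.2 0)) + (b.1 0 • u + M.carrier.tau m (b.2 0))
            rw [show (a + b).1 0 = a.1 0 + b.1 0 from rfl,
              show (a + b).2 0 = a.2 0 + b.2 0 from rfl, add_smul, map_add]
            abel }
      comm := by
        intro x h
        show (0 : Fin 1 → ℤ) 0 • u + M.carrier.tau m ((fun i => x i • h) 0)
            = M.carrier.tau (x 0 • m) h
        simp only [Pi.zero_apply, zero_smul, zero_add]
        rw [map_zsmul (M.carrier.tau m), map_zsmul M.carrier.tau, AddMonoidHom.smul_apply] }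
  isWall := by
    refine ⟨?_, ?_, ?_, ?_⟩
    · intro x y
      show M.str.lam (x 0 • m) (y.1 0 • u + M.carrier.tau m (y.2 0))
          = ∑ i : Fin 1, x i * y.1 i
      rw [map_zsmul M.str.lam, AddMonoidHom.smul_apply, map_add, map_zsmul,
        M.str.lam_tau, hlam, add_zero, Fin.sum_univ_one]
      simp [smul_eq_mul]
    · intro y y'
      show M.str.mu (y.1 0 • u + M.carrier.tau m (y.2 0))
            (y'.1 0 • u + M.carrier.tau m (y'.2 0))
          = (∑ i : Fin 1, y'.1 i • y.2 i) + P.eps • ∑ i : Fin 1, y.1 i • y'.2 i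
      have hmu_tau_u : ∀ k : H, M.str.mu (M.carrier.tau m k) u = k := by
        intro k; rw [M.str.mu_tau, hlam, one_smul]
      have hu_tau : ∀ k : H, M.str.mu u (M.carrier.tau m k) = P.eps • k := by
        intro k; rw [M.str.mu_symm, hmu_tau_u]
      have htt : ∀ k k' : H,
          M.str.mu (M.carrier.tau m k) (M.carrier.tau m k') = 0 := by
        intro k k'; rw [M.str.mu_tau, M.str.lam_tau, zero_smul]
      simp only [map_add, map_zsmul, AddMonoidHom.add_apply, AddMonoidHom.smul_apply,
        hmu, hmu_tau_u, hu_tau, htt, smul_zero, add_zero, zero_add, Fin.sum_univ_one]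
      rw [smul_comm (y.1 0) P.eps]
    · intro x
      show M.str.alphaNeg (x 0 • m) = 0
      rw [map_zsmul, han, smul_zero]
    · intro y
      show M.str.alphaPos (y.1 0 • u + M.carrier.tau m (y.2 0))
          = P.bd (∑ i : Fin 1, y.1 i • y.2 i)
      rw [M.str.alphaPos_add, wallAux_alphaPos_zsmul M.str hmu hap, zero_add,
        M.str.alphaPos_tau, han, map_zero, AddMonoidHom.zero_apply, zero_add,
        map_zsmul M.str.mu, AddMonoidHom.smul_apply]
      have hu_tau : M.str.mu u (M.carrier.tau m (y.2 0)) = P.eps • y.2 0 := by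
        rw [M.str.mu_symm, M.str.mu_tau, hlam, one_smul]
      rw [hu_tau, smul_comm, P.bd_eps, Fin.sum_univ_one]

lemma exists_primitive_ker {N j : ℕ} (hNj : j < N)
    (T : (Fin N → ℤ) →ₗ[ℤ] (Fin j → ℤ)) :
    ∃ c d : Fin N → ℤ, T c = 0 ∧ ∑ i, d i * c i = 1 := by
  -- kernel is nontrivial
  have hker : LinearMap.ker T ≠ ⊥ := by
    intro hbot
    have hinj : Function.Injective T := LinearMap.ker_eq_bot.mp hbot
    have := LinearMap.finrank_le_finrank_of_injective hinj
    rw [Module.finrank_fin_fun, Module.finrank_fin_fun] at this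
    omega
  obtain ⟨c, hc, hc0⟩ := Submodule.ne_bot_iff _ |>.mp hker
  have hTc : T c = 0 := hc
  -- extract gcd via the principal ideal generated by the coordinates
  set I : Ideal ℤ := Ideal.span (Set.range c) with hI
  obtain ⟨g, hg⟩ := (IsPrincipalIdealRing.principal I).principal
  have hgI : g ∈ I := by rw [hg]; exact Ideal.subset_span rfl
  obtain ⟨d, hd⟩ := (Submodule.mem_span_range_iff_exists_fun ℤ).mp hgI
  have hdvd : ∀ i, g ∣ c i := by
    intro i
    have : c i ∈ I := Ideal.subset_span ⟨i, rfl⟩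
    rw [hg] at this
    exact Ideal.mem_span_singleton.mp this
  choose e he using hdvd
  have hge : g • e = c := by
    funext i; exact (he i).symm
  have hg0 : g ≠ 0 := by
    intro h0
    apply hc0
    funext i
    have := he i
    rw [h0, zero_mul] at this
    exact this
  refine ⟨e, d, ?_, ?_⟩
  · have : g • T e = 0 := by rw [← map_smul, hge, hTc]
    rcases smul_eq_zero.mp this with h | h
    · exact absurd h hg0
    · exact h
  · have h1 : g * ∑ i, d i * e i = g := by
      rw [Finset.mul_sum]
      calc ∑ i, g * (d i * e i) = ∑ i, d i * c i := by
            refine Finset.sum_congr rfl fun i _ => ?_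
            rw [he i]; ring
        _ = g := by simpa [smul_eq_mul] using hd
    have h2 : g * ∑ i, d i * e i = g * 1 := by rw [h1, mul_one]
    exact mul_left_cancel₀ hg0 h2

end Proof16

/-- If `r̄(M) ≥ 2 + d(H)` then there exists a Wall form
morphism `W → M`, i.e. the complex `L(M)` is non-empty. -/
theorem statement_16 {H : Type} [AddCommGroup H] [AddGroup.FG H]
    (P : FormParameter H) (M : WallForm P) (h : srankGE M (2 + dlen H)) :
    Nonempty (WallHom (stdWall P 1) M) := by
  obtain ⟨j, ⟨f⟩⟩ := h
  set N : ℕ := 2 + dlen H + j with hN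
  -- the `ℤ^j`-component of `f.pos (·, 0)` as a linear map
  let T : (Fin N → ℤ) →ₗ[ℤ] (Fin j → ℤ) :=
    AddMonoidHom.toIntLinearMap
      (((AddMonoidHom.fst (Fin j → ℤ) (Fin j → H)).comp
        ((AddMonoidHom.snd M.carrier.Pos (stdWall P j).carrier.Pos).comp
          (f.hom.pos.comp (AddMonoidHom.inl (Fin N → ℤ) (Fin N → H))))))
  obtain ⟨c, d, hTc, hdc⟩ := exists_primitive_ker (by omega) T
  have hc0 : (f.hom.pos (c, (0 : Fin N → H))).2.1 = 0 := hTc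
  set m : M.carrier.Neg := (f.hom.neg d).1 with hm
  set u : M.carrier.Pos := (f.hom.pos (c, (0 : Fin N → H))).1 with hu
  -- λ(m, u) = 1
  have hlam : M.str.lam m u = 1 := by
    have h1 := f.isWall.1 d (c, (0 : Fin N → H))
    have h2 : M.str.lam m u
        + (stdWall P j).str.lam (f.hom.neg d).2 (f.hom.pos (c, (0 : Fin N → H))).2
        = ∑ i, d i * c i := h1
    rw [hdc] at h2
    have h3 : (stdWall P j).str.lam (f.hom.neg d).2 (f.hom.pos (c, (0 : Fin N → H))).2
        = 0 := by
      show ∑ k, (f.hom.neg d).2 k * (f.hom.pos (c, (0 : Fin N → H))).2.1 k = 0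
      rw [hc0]
      simp
    rw [h3, add_zero] at h2
    exact h2
  -- μ(u, u) = 0
  have hmu : M.str.mu u u = 0 := by
    have h1 := f.isWall.2.1 (c, (0 : Fin N → H)) (c, (0 : Fin N → H))
    have h2 : M.str.mu u u
        + (stdWall P j).str.mu (f.hom.pos (c, (0 : Fin N → H))).2
            (f.hom.pos (c, (0 : Fin N → H))).2
        = (∑ i, c i • (0 : Fin N → H) i) + P.eps • ∑ i, c i • (0 : Fin N → H) i := h1
    have h3 : (stdWall P j).str.mu (f.hom.pos (c, (0 : Fin N → H))).2
        (f.hom.pos (c, (0 : Fin N → H))).2 = 0 := by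
      show (∑ k, (f.hom.pos (c, (0 : Fin N → H))).2.1 k
              • (f.hom.pos (c, (0 : Fin N → H))).2.2 k)
          + P.eps • ∑ k, (f.hom.pos (c, (0 : Fin N → H))).2.1 k
              • (f.hom.pos (c, (0 : Fin N → H))).2.2 k = 0
      rw [hc0]
      simp
    rw [h3, add_zero] at h2
    simpa using h2
  -- α₋(m) = 0
  have han : M.str.alphaNeg m = 0 := by
    have h1 := f.isWall.2.2.1 d
    have h2 : M.str.alphaNeg m + (stdWall P j).str.alphaNeg (f.hom.neg d).2
        = (0 : P.G.Neg) := h1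
    have h3 : (stdWall P j).str.alphaNeg (f.hom.neg d).2 = 0 := rfl
    rw [h3, add_zero] at h2
    exact h2
  -- α₊(u) = 0
  have hap : M.str.alphaPos u = 0 := by
    have h1 := f.isWall.2.2.2 (c, (0 : Fin N → H))
    have h2 : M.str.alphaPos u
        + (stdWall P j).str.alphaPos (f.hom.pos (c, (0 : Fin N → H))).2
        = P.bd (∑ i, c i • (0 : Fin N → H) i) := h1
    have h3 : (stdWall P j).str.alphaPos (f.hom.pos (c, (0 : Fin N → H))).2 = 0 := by
      show P.bd (∑ k, (f.hom.pos (c, (0 : Fin N → H))).2.1 k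
          • (f.hom.pos (c, (0 : Fin N → H))).2.2 k) = 0
      rw [hc0]
      simp
    rw [h3, add_zero] at h2
    simpa using h2
  exact ⟨wallHomOfPair M m u hlam hmu han hap⟩
end
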